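/- For all integers r ≥ 2 and k ≥ 2r - 1, β_2(k, r) = 2r - 1. -/

import Mathlib

open SimpleGraph

/-- `n` is the number of vertices of a `K_r`-free `k`-partite graph in which
the subgraph induced by any `k - i` parts contains a clique of size `r - 1`. -/
def BetaWitness (i k r n : ℕ) : Prop :=
  ∃ (G : SimpleGraph (Fin n)) (P : Fin n → Fin k),
    (∀ u v, G.Adj u v → P u ≠ P v) ∧ G.CliqueFree r ∧
    ∀ S : Finset (Fin k), S.card = i →
      ∃ T : Finset (Fin n), G.IsNClique (r - 1) T ∧ ∀ v ∈ T, P v ∉ S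

noncomputable def beta (i k r : ℕ) : ℕ := sInf {n | BetaWitness i k r n}

open Finset Fin.NatCast Fin.CommRing in
lemma beta_upper (k r : ℕ) (hr : 2 ≤ r) (hk : 2 * r - 1 ≤ k) :
    BetaWitness 2 k r (2 * r - 1) := by
  classical
  set n : ℕ := 2 * r - 1 with hndef
  have hn3 : 3 ≤ n := by omega
  haveI : NeZero n := ⟨by omega⟩
  let G : SimpleGraph (Fin n) :=
    { Adj := fun i j => i ≠ j ∧ j ≠ i + 1 ∧ i ≠ j + 1
      symm := ⟨by rintro i j ⟨h1, h2, h3⟩; exact ⟨h1.symm, h3, h2⟩⟩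
      loopless := ⟨fun i h => h.1 rfl⟩ }
  have hGadj : ∀ i j : Fin n, G.Adj i j ↔ i ≠ j ∧ j ≠ i + 1 ∧ i ≠ j + 1 := fun _ _ => Iff.rfl
  refine ⟨G, fun v => Fin.castLE hk v, ?_, ?_, ?_⟩
  · intro u v huv hc
    exact huv.1 (Fin.castLE_injective hk hc)
  · -- CliqueFree r
    intro T hT
    have hdisj : ∀ u ∈ T, ∀ v ∈ T, u ≠ v →
        Disjoint ({u, u + 1} : Finset (Fin n)) {v, v + 1} := by
      intro u hu v hv huv
      have ha := hT.1 hu hv huv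
      rw [hGadj] at ha
      obtain ⟨h1, h2, h3⟩ := ha
      rw [Finset.disjoint_left]
      intro x hx hx'
      simp only [Finset.mem_insert, Finset.mem_singleton] at hx hx'
      have h4 : u + 1 ≠ v + 1 := fun hc => h1 (add_right_cancel hc)
      rcases hx with rfl | rfl <;> rcases hx' with h | h
      · exact h1 h
      · exact h3 h
      · exact h2 h.symm
      · exact h4 h
    have hcard2 : ∀ v : Fin n, ({v, v + 1} : Finset (Fin n)).card = 2 := by
      intro v
      rw [Finset.card_pair]
      intro hc
      have : (0 : Fin n) = 1 := by
        have := add_left_cancel (a := v) (b := (0:Fin n)) (c := (1:Fin n)) (by simpa using hc)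
        exact this
      have h01 : ((0 : Fin n) : ℕ) = ((1 : Fin n) : ℕ) := by rw [this]
      simp [Fin.val_one'] at h01
      omega
    have hbig : (T.biUnion fun v => ({v, v + 1} : Finset (Fin n))).card = 2 * r := by
      rw [Finset.card_biUnion hdisj]
      rw [Finset.sum_congr rfl fun v _ => hcard2 v]
      simp [hT.2, mul_comm]
    have hle := Finset.card_le_univ (T.biUnion fun v => ({v, v + 1} : Finset (Fin n)))
    simp only [Finset.card_univ, Fintype.card_fin] at hle
    omega
  · -- property
    intro S hS
    set F : Finset (Fin n) := univ.filter (fun v => Fin.castLE hk v ∈ S) with hFdef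
    have hF2 : F.card ≤ 2 := by
      have := Finset.card_le_card_of_injOn (s := F) (t := S) (fun v => Fin.castLE hk v)
        (fun a ha => (Finset.mem_filter.mp ha).2)
        (fun a _ b _ hab => Fin.castLE_injective hk hab)
      omega
    obtain ⟨F', hFF', hF'⟩ := Finset.exists_superset_card_eq (n := 2) hF2
      (by simp only [Fintype.card_fin]; omega)
    obtain ⟨a, b, hab, rfl⟩ := Finset.card_eq_two.mp hF'
    set d : Fin n := b - a with hddef
    have hd0 : d ≠ 0 := sub_ne_zero_of_ne (Ne.symm hab)
    set dv : ℕ := (d : ℕ) with hdvdef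
    have hdv1 : 1 ≤ dv := by
      rcases Nat.eq_zero_or_pos dv with h | h
      · exact absurd (Fin.ext (by simpa [hdvdef] using h) : d = 0) hd0
      · exact h
    have hdvn : dv ≤ n - 1 := by have := d.isLt; omega
    set J : Finset ℕ :=
      ((Finset.range (dv / 2)).image fun i => 2 * i + 1) ∪
      ((Finset.range ((n - dv) / 2)).image fun i => dv + 1 + 2 * i) with hJdef
    have hJmem : ∀ j ∈ J, (1 ≤ j ∧ j + 1 ≤ dv ∧ j % 2 = 1) ∨
        (dv + 1 ≤ j ∧ j + 1 ≤ n ∧ j % 2 = (dv + 1) % 2) := by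
      intro j hj
      simp only [hJdef, Finset.mem_union, Finset.mem_image, Finset.mem_range] at hj
      rcases hj with ⟨i, hi, rfl⟩ | ⟨i, hi, rfl⟩
      · left; omega
      · right; omega
    have hJgap : ∀ j ∈ J, ∀ j' ∈ J, j' ≠ j + 1 := by
      intro j hj j' hj' hc
      have h1 := hJmem j hj
      have h2 := hJmem j' hj'
      omega
    have hJcard : J.card = r - 1 := by
      rw [hJdef, Finset.card_union_of_disjoint,
        Finset.card_image_of_injective _ (fun x y h => by omega),
        Finset.card_image_of_injective _ (fun x y h => by omega),
        Finset.card_range, Finset.card_range]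
      · omega
      · rw [Finset.disjoint_left]
        rintro x hx hx'
        simp only [Finset.mem_image, Finset.mem_range] at hx hx'
        omega
    have hvc : ∀ j ∈ J, ((j : Fin n) : ℕ) = j := by
      intro j hj
      have := hJmem j hj
      exact Fin.val_cast_of_lt (by omega)
    have hinj : ∀ j ∈ J, ∀ j' ∈ J, a + (j : Fin n) = a + (j' : Fin n) → j = j' := by
      intro j hj j' hj' hc
      have := add_left_cancel hc
      rw [← hvc j hj, ← hvc j' hj', this]
    have hsucc : ∀ j ∈ J, ∀ j' ∈ J, a + (j' : Fin n) ≠ a + (j : Fin n) + 1 := by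
      intro j hj j' hj' hc
      have hjb := hJmem j hj
      have hjb' := hJmem j' hj'
      by_cases hjn : j + 1 = n
      · have hz : ((j : Fin n) : Fin n) + 1 = ((0 : ℕ) : Fin n) := by
          have : (((j+1 : ℕ)) : Fin n) = ((0:ℕ) : Fin n) := by rw [hjn]; simp
          rw [← this]; push_cast; ring
        have hc' : a + ((j' : ℕ) : Fin n) = a + ((0:ℕ) : Fin n) := by
          rw [hc, add_assoc, hz]
        have := add_left_cancel hc'
        have hval := congrArg Fin.val this
        rw [hvc j' hj'] at hval
        simp at hval
        omega
      · have hc' : a + ((j' : ℕ) : Fin n) = a + (((j + 1 : ℕ)) : Fin n) := by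
          rw [hc]; push_cast; ring
        have := add_left_cancel hc'
        have hval := congrArg Fin.val this
        rw [hvc j' hj'] at hval
        rw [Fin.val_cast_of_lt (by omega)] at hval
        exact hJgap j hj j' hj' hval
    refine ⟨Finset.image (fun j : ℕ => a + (j : Fin n)) J, ⟨?_, ?_⟩, ?_⟩
    · -- clique
      intro u hu v hv huv
      rw [Finset.mem_coe, Finset.mem_image] at hu hv
      obtain ⟨j, hj, rfl⟩ := hu
      obtain ⟨j', hj', rfl⟩ := hv
      rw [hGadj]
      exact ⟨huv, hsucc j hj j' hj', fun hc => hsucc j' hj' j hj hc⟩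
    · rw [Finset.card_image_of_injOn (fun x hx y hy h => hinj x hx y hy h), hJcard]
    · intro v hv hvS
      simp only [Finset.mem_image] at hv
      obtain ⟨j, hj, rfl⟩ := hv
      have hmemF : a + (j : Fin n) ∈ F := Finset.mem_filter.mpr ⟨Finset.mem_univ _, hvS⟩
      have := hFF' hmemF
      simp only [Finset.mem_insert, Finset.mem_singleton] at this
      have hjprops := hJmem j hj
      rcases this with h | h
      · -- a + j = a
        have h0 : a + (j : Fin n) = a + (0 : Fin n) := by simpa using h
        have h1 := add_left_cancel h0
        have h2 := congrArg Fin.val h1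
        rw [hvc j hj] at h2
        simp at h2
        omega
      · -- a + j = b = a + d
        have hb' : b = a + d := by rw [hddef]; ring
        have h0 : a + (j : Fin n) = a + d := by rw [← hb']; exact h
        have h1 := add_left_cancel h0
        have h2 := congrArg Fin.val h1
        rw [hvc j hj] at h2
        omega

open Finset in
lemma beta_lower (k r n : ℕ) (hr : 2 ≤ r) (hk : 2 * r - 1 ≤ k)
    (h : BetaWitness 2 k r n) : 2 * r - 1 ≤ n := by
  classical
  by_contra hn
  push_neg at hn
  obtain ⟨G, P, hP, hfree, hcl⟩ := h
  have hk3 : 3 ≤ k := by omega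
  have hkcard : 1 < Fintype.card (Fin k) := by simp; omega
  -- pure two-vertex avoidance property
  have prop : ∀ x y : Fin n, ∃ T, G.IsNClique (r - 1) T ∧ x ∉ T ∧ y ∉ T := by
    intro x y
    by_cases hxy : P x = P y
    · obtain ⟨q, hq⟩ := Fintype.exists_ne_of_one_lt_card hkcard (P x)
      obtain ⟨T, hT, hav⟩ := hcl {P x, q} (Finset.card_pair (Ne.symm hq))
      refine ⟨T, hT, fun hx => hav x hx (by simp), fun hy => hav y hy (by simp [← hxy])⟩
    · obtain ⟨T, hT, hav⟩ := hcl {P x, P y} (Finset.card_pair hxy)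
      exact ⟨T, hT, fun hx => hav x hx (by simp), fun hy => hav y hy (by simp)⟩
  -- a clique of size r-1 exists
  obtain ⟨C, hC, -, -⟩ :
      ∃ C, G.IsNClique (r - 1) C ∧ True ∧ True := by
    obtain ⟨q, hq⟩ := Fintype.exists_ne_of_one_lt_card hkcard ⟨0, by omega⟩
    obtain ⟨T, hT, -⟩ := hcl {(⟨0, by omega⟩ : Fin k), q} (Finset.card_pair (Ne.symm hq))
    exact ⟨T, hT, trivial, trivial⟩
  set W : Finset (Fin n) := Cᶜ with hWdef
  -- Hall condition for the non-adjacency graph between C and W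
  have hall : ∀ m : ℕ, ∀ A ⊆ C, A.card = m →
      A.card ≤ (W.filter fun w => ∃ a ∈ A, ¬ G.Adj a w).card := by
    intro m
    induction m using Nat.strong_induction_on with
    | _ m IH =>
      intro A hAC hAm
      by_contra hbad
      push_neg at hbad
      set N : Finset (Fin n) := W.filter (fun w => ∃ a ∈ A, ¬ G.Adj a w) with hNdef
      have hNA : N ⊆ W := Finset.filter_subset _ _
      have hAne : A.Nonempty := by
        rcases A.eq_empty_or_nonempty with rfl | hne
        · simp at hbad
        · exact hne
      obtain ⟨a₀, ha₀⟩ := hAne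
      have hm1 : 1 ≤ m := by rw [← hAm]; exact Finset.card_pos.mpr ⟨a₀, ha₀⟩
      have hEcard : (A.erase a₀).card = m - 1 := by
        rw [Finset.card_erase_of_mem ha₀, hAm]
      -- matching on A.erase a₀
      have hmatch : ∃ f : ↥(A.erase a₀) → Fin n, Function.Injective f ∧
          ∀ x : ↥(A.erase a₀), f x ∈ W.filter (fun w => ¬ G.Adj x.1 w) := by
        rw [← Finset.all_card_le_biUnion_card_iff_exists_injective]
        intro s
        have hsub : (s.image Subtype.val) ⊆ A.erase a₀ := by
          intro x hx
          simp only [Finset.mem_image] at hx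
          obtain ⟨⟨y, hy⟩, _, rfl⟩ := hx
          exact hy
        have hcards : (s.image Subtype.val).card = s.card :=
          Finset.card_image_of_injective _ Subtype.val_injective
        have hlt : (s.image Subtype.val).card < m := by
          have := Finset.card_le_card hsub
          omega
        have := IH _ hlt (s.image Subtype.val)
          (fun x hx => hAC (Finset.mem_of_mem_erase (hsub hx))) rfl
        have hbu : (s.biUnion fun x => W.filter (fun w => ¬ G.Adj x.1 w)) =
            W.filter (fun w => ∃ a ∈ s.image Subtype.val, ¬ G.Adj a w) := by
          ext w
          simp only [Finset.mem_biUnion, Finset.mem_filter, Finset.mem_image]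
          constructor
          · rintro ⟨x, hx, hw, hadj⟩
            exact ⟨hw, x.1, ⟨x, hx, rfl⟩, hadj⟩
          · rintro ⟨hw, a, ⟨x, hx, rfl⟩, hadj⟩
            exact ⟨x, hx, hw, hadj⟩
        rw [hbu]
        rwa [hcards] at this
      obtain ⟨f, hfinj, hfmem⟩ := hmatch
      -- the image of f is exactly N
      have hImsub : ((A.erase a₀).attach.image f) ⊆ N := by
        intro w hw
        simp only [Finset.mem_image, Finset.mem_attach, true_and] at hw
        obtain ⟨x, rfl⟩ := hw
        have := hfmem x
        rw [Finset.mem_filter] at this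
        exact Finset.mem_filter.mpr ⟨this.1,
          ⟨x.1, Finset.mem_of_mem_erase x.2, this.2⟩⟩
      have hImcard : ((A.erase a₀).attach.image f).card = m - 1 := by
        rw [Finset.card_image_of_injective _ hfinj, Finset.card_attach, hEcard]
      have hNcard : N.card = m - 1 := by
        have h1 := Finset.card_le_card hImsub
        omega
      have hImeq : ((A.erase a₀).attach.image f) = N :=
        Finset.eq_of_subset_of_card_le hImsub (by omega)
      -- the clique D avoiding a₀
      obtain ⟨D, hD, ha₀D, -⟩ := prop a₀ a₀
      -- counting : |D ∩ N| ≤ |(A.erase a₀) \ D|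
      have hDN : (D ∩ N).card ≤ ((A.erase a₀) \ D).card := by
        apply Finset.card_le_card_of_injOn
          (f := fun b => if hb : ∃ x : ↥(A.erase a₀), f x = b then hb.choose.1 else a₀)
        · intro b hb
          rw [Finset.mem_coe, Finset.mem_inter] at hb
          rw [Finset.mem_coe]; dsimp only
          have hbN : b ∈ N := hb.2
          rw [← hImeq] at hbN
          simp only [Finset.mem_image, Finset.mem_attach, true_and] at hbN
          obtain ⟨x, hx⟩ := hbN
          have hex : ∃ x : ↥(A.erase a₀), f x = b := ⟨x, hx⟩
          rw [dif_pos hex]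
          have hch := hex.choose_spec
          refine Finset.mem_sdiff.mpr ⟨hex.choose.2, ?_⟩
          intro hinD
          -- f choose = b, and ¬ Adj choose.1 b, both in clique D
          have hmm := hfmem hex.choose
          rw [Finset.mem_filter, hch] at hmm
          have hne : hex.choose.1 ≠ b := by
            intro hcc
            have hbW : b ∈ W := hmm.1
            rw [hWdef, Finset.mem_compl] at hbW
            exact hbW (by rw [← hcc]; exact hAC (Finset.mem_of_mem_erase hex.choose.2))
          exact hmm.2 (hD.1 hinD hb.1 hne)
        · intro b1 hb1 b2 hb2 heq
          rw [Finset.coe_inter] at hb1 hb2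
          have hbN1 : b1 ∈ N := by
            have := hb1.2; simpa using this
          have hbN2 : b2 ∈ N := by
            have := hb2.2; simpa using this
          rw [← hImeq] at hbN1 hbN2
          simp only [Finset.mem_image, Finset.mem_attach, true_and] at hbN1 hbN2
          obtain ⟨x1, hx1⟩ := hbN1
          obtain ⟨x2, hx2⟩ := hbN2
          have hex1 : ∃ x : ↥(A.erase a₀), f x = b1 := ⟨x1, hx1⟩
          have hex2 : ∃ x : ↥(A.erase a₀), f x = b2 := ⟨x2, hx2⟩
          dsimp only at heq
          rw [dif_pos hex1, dif_pos hex2] at heq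
          have hcheq : hex1.choose = hex2.choose := Subtype.ext heq
          rw [← hex1.choose_spec, ← hex2.choose_spec, hcheq]
      -- |D ∩ A| + |D ∩ N| ≤ m - 1
      have hsum : (D ∩ A).card + (D ∩ N).card ≤ m - 1 := by
        have hsub1 : D ∩ A ⊆ A.erase a₀ := by
          intro x hx
          rw [Finset.mem_inter] at hx
          exact Finset.mem_erase.mpr ⟨fun hcc => ha₀D (hcc ▸ hx.1), hx.2⟩
        have hdisj : Disjoint (D ∩ A) ((A.erase a₀) \ D) := by
          rw [Finset.disjoint_left]
          intro x hx hx'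
          exact (Finset.mem_sdiff.mp hx').2 (Finset.mem_inter.mp hx).1
        have hone : (D ∩ A) ∪ ((A.erase a₀) \ D) ⊆ A.erase a₀ :=
          Finset.union_subset hsub1 (Finset.sdiff_subset)
        have := Finset.card_le_card hone
        rw [Finset.card_union_of_disjoint hdisj] at this
        omega
      -- build a too-large clique
      set E : Finset (Fin n) := A ∪ (D \ (A ∪ N)) with hEdef
      have hEclique : G.IsClique ↑E := by
        intro u hu v hv huv
        rw [Finset.coe_union, Set.mem_union, Finset.mem_coe, Finset.mem_coe] at hu hv
        have key : ∀ u' v' : Fin n, u' ∈ A → v' ∈ D \ (A ∪ N) → u' ≠ v' → G.Adj u' v' := by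
          intro u' v' hu' hv' hne
          rw [Finset.mem_sdiff, Finset.mem_union] at hv'
          push_neg at hv'
          obtain ⟨hvD, hvA, hvN⟩ := hv'
          by_cases hvC : v' ∈ C
          · exact hC.1 (hAC hu') hvC hne
          · have hvW : v' ∈ W := by rw [hWdef, Finset.mem_compl]; exact hvC
            by_contra hadj
            exact hvN (Finset.mem_filter.mpr ⟨hvW, ⟨u', hu', hadj⟩⟩)
        rcases hu with hu | hu <;> rcases hv with hv | hv
        · exact hC.1 (hAC hu) (hAC hv) huv
        · exact key u v hu hv huv
        · exact (key v u hv hu (Ne.symm huv)).symm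
        · exact hD.1 (Finset.mem_sdiff.mp hu).1 (Finset.mem_sdiff.mp hv).1 huv
      have hEcard2 : r ≤ E.card := by
        have hdisjE : Disjoint A (D \ (A ∪ N)) := by
          rw [Finset.disjoint_left]
          intro x hx hx'
          rw [Finset.mem_sdiff, Finset.mem_union] at hx'
          exact hx'.2 (Or.inl hx)
        have h1 : E.card = A.card + (D \ (A ∪ N)).card :=
          Finset.card_union_of_disjoint hdisjE
        have h2 : D \ (A ∪ N) = D \ (D ∩ (A ∪ N)) := by
          rw [Finset.sdiff_inter_self_left]
        have h3 : (D \ (A ∪ N)).card = D.card - (D ∩ (A ∪ N)).card := by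
          rw [h2, Finset.card_sdiff_of_subset (Finset.inter_subset_left)]
        have h4 : (D ∩ (A ∪ N)).card ≤ (D ∩ A).card + (D ∩ N).card := by
          rw [Finset.inter_union_distrib_left]
          exact Finset.card_union_le _ _
        have h5 : (D ∩ (A ∪ N)).card ≤ D.card :=
          Finset.card_le_card (Finset.inter_subset_left)
        have hDcard : D.card = r - 1 := hD.2
        omega
      obtain ⟨E', hE'sub, hE'card⟩ := Finset.exists_subset_card_eq hEcard2
      exact hfree E' ⟨hEclique.subset (by exact_mod_cast hE'sub), hE'card⟩
  -- Use Hall's theorem to extract the matching C → W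
  have hCcard : C.card = r - 1 := hC.2
  have hWcard : W.card = n - (r - 1) := by
    rw [hWdef, Finset.card_compl, Fintype.card_fin, hCcard]
  have hCne : C.Nonempty := Finset.card_pos.mp (by omega)
  obtain ⟨x₀v, hx₀v⟩ := hCne
  have hmatchC : ∃ f : ↥C → Fin n, Function.Injective f ∧
      ∀ x : ↥C, f x ∈ W.filter (fun w => ¬ G.Adj x.1 w) := by
    rw [← Finset.all_card_le_biUnion_card_iff_exists_injective]
    intro s
    have hsub : (s.image Subtype.val) ⊆ C := by
      intro x hx
      simp only [Finset.mem_image] at hx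
      obtain ⟨⟨y, hy⟩, _, rfl⟩ := hx
      exact hy
    have hcards : (s.image Subtype.val).card = s.card :=
      Finset.card_image_of_injective _ Subtype.val_injective
    have := hall (s.image Subtype.val).card (s.image Subtype.val) hsub rfl
    have hbu : (s.biUnion fun x => W.filter (fun w => ¬ G.Adj x.1 w)) =
        W.filter (fun w => ∃ a ∈ s.image Subtype.val, ¬ G.Adj a w) := by
      ext w
      simp only [Finset.mem_biUnion, Finset.mem_filter, Finset.mem_image]
      constructor
      · rintro ⟨x, hx, hw, hadj⟩
        exact ⟨hw, x.1, ⟨x, hx, rfl⟩, hadj⟩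
      · rintro ⟨hw, a, ⟨x, hx, rfl⟩, hadj⟩
        exact ⟨x, hx, hw, hadj⟩
    rw [hbu]
    rwa [hcards] at this
  obtain ⟨M, hMinj, hMmem⟩ := hmatchC
  set x₀ : ↥C := ⟨x₀v, hx₀v⟩ with hx₀def
  obtain ⟨D, hD, hx₀D, hMx₀D⟩ := prop x₀.1 (M x₀)
  set A₁ : Finset (Fin n) := D ∩ C with hA₁def
  set B₁ : Finset (Fin n) := D \ C with hB₁def
  have hAB : A₁.card + B₁.card = r - 1 := by
    rw [hA₁def, hB₁def, Finset.card_inter_add_card_sdiff, hD.2]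
  -- the image of M over insert x₀ A₁
  set K : Finset ↥C := C.attach.filter (fun x => x.1 ∈ insert x₀v A₁) with hKdef
  have hKcard : K.card = A₁.card + 1 := by
    have himg : K.image Subtype.val = insert x₀v A₁ := by
      ext y
      simp only [hKdef, Finset.mem_image, Finset.mem_filter, Finset.mem_attach, true_and]
      constructor
      · rintro ⟨x, hx, rfl⟩; exact hx
      · intro hy
        have hyC : y ∈ C := by
          rcases Finset.mem_insert.mp hy with rfl | hyA
          · exact hx₀v
          · exact (Finset.mem_inter.mp hyA).2
        exact ⟨⟨y, hyC⟩, hy, rfl⟩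
    have h1 : K.card = (K.image Subtype.val).card :=
      (Finset.card_image_of_injective _ Subtype.val_injective).symm
    rw [h1, himg, Finset.card_insert_of_notMem
      (fun hx₀A₁ => hx₀D (Finset.mem_inter.mp hx₀A₁).1)]
  have hB₁W : B₁ ⊆ W := by
    intro b hb
    rw [hB₁def, Finset.mem_sdiff] at hb
    rw [hWdef, Finset.mem_compl]
    exact hb.2
  have hKimW : K.image M ⊆ W := by
    intro w hw
    simp only [Finset.mem_image] at hw
    obtain ⟨x, _, rfl⟩ := hw
    exact (Finset.mem_filter.mp (hMmem x)).1
  have hKimcard : (K.image M).card = A₁.card + 1 := by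
    rw [Finset.card_image_of_injective _ hMinj, hKcard]
  have hdisjB : Disjoint B₁ (K.image M) := by
    rw [Finset.disjoint_left]
    intro b hbB hbIm
    simp only [Finset.mem_image] at hbIm
    obtain ⟨x, hxK, hbx⟩ := hbIm
    rw [hKdef, Finset.mem_filter] at hxK
    have hbD : b ∈ D := (Finset.mem_sdiff.mp hbB).1
    rcases Finset.mem_insert.mp hxK.2 with hx | hxA
    · -- x.1 = x₀v, so b = M x₀ ∉ D
      have : x = x₀ := Subtype.ext hx
      rw [this] at hbx
      exact hMx₀D (hbx ▸ hbD)
    · -- x.1 ∈ A₁ ⊆ D, and ¬Adj x.1 (M x) = b, both in D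
      have hxD : x.1 ∈ D := (Finset.mem_inter.mp hxA).1
      have hmm := Finset.mem_filter.mp (hMmem x)
      have hne : x.1 ≠ b := by
        intro hcc
        have hbW : b ∈ W := hB₁W hbB
        rw [hWdef, Finset.mem_compl] at hbW
        exact hbW (hcc ▸ x.2)
      rw [hbx] at hmm
      exact hmm.2 (hD.1 hxD hbD hne)
  -- counting: B₁ ∪ K.image M ⊆ W
  have hfinal : B₁.card + (A₁.card + 1) ≤ W.card := by
    have hsub : B₁ ∪ (K.image M) ⊆ W := Finset.union_subset hB₁W hKimW
    have := Finset.card_le_card hsub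
    rw [Finset.card_union_of_disjoint hdisjB, hKimcard] at this
    omega
  -- n ≤ 2r-2 so |W| ≤ r-1 ; contradiction
  have hCn : C.card ≤ n := by
    simpa [Fintype.card_fin] using Finset.card_le_univ C
  omega

theorem stmt_8 (k r : ℕ) (hr : 2 ≤ r) (hk : 2 * r - 1 ≤ k) :
    beta 2 k r = 2 * r - 1 := by
  have hup := beta_upper k r hr hk
  refine le_antisymm (Nat.sInf_le hup) ?_
  have hmem : sInf {n | BetaWitness 2 k r n} ∈ {n | BetaWitness 2 k r n} :=
    Nat.sInf_mem ⟨_, hup⟩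
  exact beta_lower k r _ hr hk hmem
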